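/- Let $f : \mathbb{R}^2 \to (0,\infty)$ be the density of a nondegenerate centered bivariate Gaussian, and let $F(x,y) = \int_{-\infty}^x \int_{-\infty}^y f(s,t)\,dt\,ds$ be its cumulative distribution function. Then the function $(x,y) \mapsto \log F(x,y)$ is concave on $\mathbb{R}^2$. -/

import Mathlib

set_option maxHeartbeats 1000000

open MeasureTheory

open Set Real Pointwise
open scoped ENNReal NNReal

section PrekopaLeindler

private lemma compact_superadd {K₁ K₂ C : Set ℝ} (hK₁ : IsCompact K₁) (hK₂ : IsCompact K₂)
    (h₁ : K₁.Nonempty) (h₂ : K₂.Nonempty) (hC : MeasurableSet C)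
    (hsub : ∀ a ∈ K₁, ∀ b ∈ K₂, a + b ∈ C) :
    volume K₁ + volume K₂ ≤ volume C := by
  set m := sInf K₁ with hm
  set M := sSup K₂ with hM
  have hmK : m ∈ K₁ := hK₁.sInf_mem h₁
  have hMK : M ∈ K₂ := hK₂.sSup_mem h₂
  set U : Set ℝ := (fun x => x + M) '' K₁ with hU
  set V : Set ℝ := (fun x => m + x) '' K₂ with hV
  have hUV : U ∪ V ⊆ C := by
    rintro x (⟨k, hk, rfl⟩ | ⟨k, hk, rfl⟩)
    · exact hsub k hk M hMK
    · exact hsub m hmK k hk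
  have hUm : MeasurableSet U := (hK₁.image (continuous_add_right M)).isClosed.measurableSet
  have hVm : MeasurableSet V := (hK₂.image (continuous_add_left m)).isClosed.measurableSet
  have hInter : U ∩ V ⊆ {m + M} := by
    rintro x ⟨⟨k₁, hk₁, hx₁⟩, ⟨k₂, hk₂, hx₂⟩⟩
    simp only at hx₁ hx₂
    have h1 : m ≤ k₁ := csInf_le hK₁.bddBelow hk₁
    have h2 : k₂ ≤ M := le_csSup hK₂.bddAbove hk₂
    have hk1m : k₁ = m := by linarith
    simp only [mem_singleton_iff]
    linarith
  have hIzero : volume (U ∩ V) = 0 :=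
    le_antisymm ((measure_mono hInter).trans (by simp)) zero_le
  have hvolU : volume U = volume K₁ := by
    have : U = (fun x => M + x) '' K₁ := by
      rw [hU]; congr 1; ext x; simp [add_comm]
    rw [this, image_add_left, measure_preimage_add]
  have hvolV : volume V = volume K₂ := by
    rw [hV, image_add_left, measure_preimage_add]
  calc volume K₁ + volume K₂ = volume U + volume V := by rw [hvolU, hvolV]
    _ = volume (U ∪ V) + volume (U ∩ V) := (measure_union_add_inter U hVm).symm
    _ = volume (U ∪ V) := by rw [hIzero, add_zero]
    _ ≤ volume C := measure_mono hUV

private lemma meas_superadd {A B C : Set ℝ} (hA : MeasurableSet A) (hB : MeasurableSet B)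
    (hC : MeasurableSet C) (hAne : A.Nonempty) (hBne : B.Nonempty)
    (hsub : ∀ a ∈ A, ∀ b ∈ B, a + b ∈ C) :
    volume A + volume B ≤ volume C := by
  obtain ⟨a₀, ha₀⟩ := hAne
  obtain ⟨b₀, hb₀⟩ := hBne
  -- translate-inclusion bounds
  have hAC : volume A ≤ volume C := by
    have : (fun x => b₀ + x) '' A ⊆ C := by
      rintro x ⟨k, hk, rfl⟩; simpa [add_comm] using hsub k hk b₀ hb₀
    calc volume A = volume ((fun x => b₀ + x) '' A) := by
          rw [image_add_left, measure_preimage_add]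
      _ ≤ volume C := measure_mono this
  have hBC : volume B ≤ volume C := by
    have : (fun x => a₀ + x) '' B ⊆ C := by
      rintro x ⟨k, hk, rfl⟩; exact hsub a₀ ha₀ k hk
    calc volume B = volume ((fun x => a₀ + x) '' B) := by
          rw [image_add_left, measure_preimage_add]
      _ ≤ volume C := measure_mono this
  rcases eq_or_ne (volume A) ⊤ with hAi | hAf
  · rw [hAi] at hAC; simp [hAi, top_le_iff.mp hAC]
  rcases eq_or_ne (volume B) ⊤ with hBi | hBf
  · rw [hBi] at hBC; simp [hBi, top_le_iff.mp hBC]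
  refine ENNReal.le_of_forall_pos_le_add fun ε hε hCf => ?_
  obtain ⟨K₁, hK₁A, hK₁c, hK₁v⟩ := hA.exists_isCompact_lt_add (μ := volume) hAf
    (ε := (ε:ℝ≥0∞)/2) (by simp [hε.ne'])
  obtain ⟨K₂, hK₂A, hK₂c, hK₂v⟩ := hB.exists_isCompact_lt_add (μ := volume) hBf
    (ε := (ε:ℝ≥0∞)/2) (by simp [hε.ne'])
  set K₁' := insert a₀ K₁ with hK₁'
  set K₂' := insert b₀ K₂ with hK₂'
  have hc₁ : IsCompact K₁' := hK₁c.insert a₀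
  have hc₂ : IsCompact K₂' := hK₂c.insert b₀
  have key : volume K₁' + volume K₂' ≤ volume C :=
    compact_superadd hc₁ hc₂ (insert_nonempty _ _) (insert_nonempty _ _) hC
      (fun a ha b hb => hsub a (insert_subset ha₀ hK₁A ha) b (insert_subset hb₀ hK₂A hb))
  have e₁ : volume A ≤ volume K₁' + (ε:ℝ≥0∞)/2 :=
    hK₁v.le.trans (add_le_add_left (measure_mono (subset_insert _ _)) _)
  have e₂ : volume B ≤ volume K₂' + (ε:ℝ≥0∞)/2 :=
    hK₂v.le.trans (add_le_add_left (measure_mono (subset_insert _ _)) _)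
  calc volume A + volume B ≤ (volume K₁' + (ε:ℝ≥0∞)/2) + (volume K₂' + (ε:ℝ≥0∞)/2) :=
        add_le_add e₁ e₂
    _ = (volume K₁' + volume K₂') + ((ε:ℝ≥0∞)/2 + (ε:ℝ≥0∞)/2) := add_add_add_comm _ _ _ _
    _ = (volume K₁' + volume K₂') + ε := by rw [ENNReal.add_halves]
    _ ≤ volume C + ε := by gcongr

private lemma PL1_core {t : ℝ} (ht0 : 0 < t) (ht1 : t < 1) {f g h : ℝ → ℝ}
    (hfm : Measurable f) (hgm : Measurable g) (hhm : Measurable h)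
    (hf0 : ∀ x, 0 ≤ f x) (hg0 : ∀ x, 0 ≤ g x) (hh0 : ∀ x, 0 ≤ h x)
    (hf1 : ∀ x, f x ≤ 1) (hg1 : ∀ x, g x ≤ 1)
    (hfs : ∀ u, 0 < u → u < 1 → ∃ x, u < f x)
    (hgs : ∀ u, 0 < u → u < 1 → ∃ y, u < g y)
    (hyp : ∀ x y, f x ^ (1 - t) * g y ^ t ≤ h ((1-t)*x + t*y)) :
    ENNReal.ofReal (1-t) * (∫⁻ x, ENNReal.ofReal (f x)) +
      ENNReal.ofReal t * (∫⁻ x, ENNReal.ofReal (g x)) ≤ ∫⁻ x, ENNReal.ofReal (h x) := by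
  have h1t : (0:ℝ) < 1 - t := by linarith
  set A : ℝ → Set ℝ := fun u => {x | u < f x} with hA
  set B : ℝ → Set ℝ := fun u => {x | u < g x} with hB
  set Cs : ℝ → Set ℝ := fun u => {x | u < h x} with hCs
  have hAm : ∀ u, MeasurableSet (A u) := fun u => measurableSet_lt measurable_const hfm
  have hBm : ∀ u, MeasurableSet (B u) := fun u => measurableSet_lt measurable_const hgm
  have hCm : ∀ u, MeasurableSet (Cs u) := fun u => measurableSet_lt measurable_const hhm
  -- layer cake
  have lcf : ∫⁻ x, ENNReal.ofReal (f x) = ∫⁻ u in Ioi 0, volume (A u) :=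
    lintegral_eq_lintegral_meas_lt volume (ae_of_all _ hf0) hfm.aemeasurable
  have lcg : ∫⁻ x, ENNReal.ofReal (g x) = ∫⁻ u in Ioi 0, volume (B u) :=
    lintegral_eq_lintegral_meas_lt volume (ae_of_all _ hg0) hgm.aemeasurable
  have lch : ∫⁻ x, ENNReal.ofReal (h x) = ∫⁻ u in Ioi 0, volume (Cs u) :=
    lintegral_eq_lintegral_meas_lt volume (ae_of_all _ hh0) hhm.aemeasurable
  -- truncation to Ioo 0 1 for f and g
  have trunc : ∀ (φ : ℝ → ℝ), (∀ x, φ x ≤ 1) →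
      ∫⁻ u in Ioi 0, volume {x | u < φ x} = ∫⁻ u in Ioo 0 1, volume {x | u < φ x} := by
    intro φ hφ
    rw [← Ioo_union_Ici_eq_Ioi (by norm_num : (0:ℝ) < 1),
      lintegral_union measurableSet_Ici]
    · have : ∫⁻ u in Ici (1:ℝ), volume {x | u < φ x} = 0 := by
        rw [setLIntegral_congr_fun measurableSet_Ici
          (fun u (hu : 1 ≤ u) => ?_), lintegral_zero]
        have : {x | u < φ x} = ∅ := eq_empty_of_forall_notMem
          (fun x hx => absurd hx (not_lt.2 ((hφ x).trans hu)))
        rw [this]; simp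
      rw [this, add_zero]
    · exact Set.disjoint_left.2 fun u hu hu' => absurd hu.2 (not_lt.2 hu')
  -- key pointwise inequality on levels
  have key : ∀ u ∈ Ioo (0:ℝ) 1,
      ENNReal.ofReal (1-t) * volume (A u) + ENNReal.ofReal t * volume (B u)
        ≤ volume (Cs u) := by
    rintro u ⟨hu0, hu1⟩
    obtain ⟨x₀, hx₀⟩ := hfs u hu0 hu1
    obtain ⟨y₀, hy₀⟩ := hgs u hu0 hu1
    have hsub : ∀ a ∈ (1-t) • A u, ∀ b ∈ t • B u, a + b ∈ Cs u := by
      rintro a ⟨x, hx, rfl⟩ b ⟨y, hy, rfl⟩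
      have hxA : u < f x := hx
      have hyB : u < g y := hy
      have e1 : u = u ^ (1-t) * u ^ t := by
        rw [← Real.rpow_add hu0]; norm_num
      have e2 : u ^ (1-t) * u ^ t < f x ^ (1-t) * g y ^ t := by
        apply mul_lt_mul' (Real.rpow_le_rpow hu0.le hxA.le h1t.le)
          (Real.rpow_lt_rpow hu0.le hyB ht0) (Real.rpow_nonneg hu0.le t)
        exact Real.rpow_pos_of_pos (hu0.trans hxA) _
      have := (hyp x y)
      show u < h ((1-t) • x + t • y)
      simp only [smul_eq_mul]
      calc u = u ^ (1-t) * u ^ t := e1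
        _ < f x ^ (1-t) * g y ^ t := e2
        _ ≤ h ((1-t)*x + t*y) := this
    have := meas_superadd ((hAm u).const_smul₀ (1-t)) ((hBm u).const_smul₀ t) (hCm u)
      ((Set.Nonempty.smul_set ⟨x₀, hx₀⟩ : ((1-t) • A u).Nonempty))
      ((Set.Nonempty.smul_set ⟨y₀, hy₀⟩ : (t • B u).Nonempty)) hsub
    calc ENNReal.ofReal (1-t) * volume (A u) + ENNReal.ofReal t * volume (B u)
        = volume ((1-t) • A u) + volume (t • B u) := by
          rw [Measure.addHaar_smul_of_nonneg volume h1t.le, Measure.addHaar_smul_of_nonneg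
            volume ht0.le]
          simp
      _ ≤ volume (Cs u) := this
  -- measurability in u
  have hAmeas : Measurable fun u => volume (A u) :=
    Antitone.measurable (fun u v huv => measure_mono (fun x hx => lt_of_le_of_lt huv hx))
  have hBmeas : Measurable fun u => volume (B u) :=
    Antitone.measurable (fun u v huv => measure_mono (fun x hx => lt_of_le_of_lt huv hx))
  calc ENNReal.ofReal (1-t) * (∫⁻ x, ENNReal.ofReal (f x)) +
        ENNReal.ofReal t * (∫⁻ x, ENNReal.ofReal (g x))
      = ENNReal.ofReal (1-t) * (∫⁻ u in Ioo 0 1, volume (A u)) +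
        ENNReal.ofReal t * (∫⁻ u in Ioo 0 1, volume (B u)) := by
        rw [lcf, lcg, trunc f hf1, trunc g hg1]
    _ = ∫⁻ u in Ioo 0 1, (ENNReal.ofReal (1-t) * volume (A u) +
        ENNReal.ofReal t * volume (B u)) := by
        rw [lintegral_add_left ((hAmeas.const_mul _)), lintegral_const_mul _ hAmeas,
          lintegral_const_mul _ hBmeas]
    _ ≤ ∫⁻ u in Ioo 0 1, volume (Cs u) :=
        setLIntegral_mono' measurableSet_Ioo key
    _ ≤ ∫⁻ u in Ioi 0, volume (Cs u) := lintegral_mono_set Ioo_subset_Ioi_self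
    _ = ∫⁻ x, ENNReal.ofReal (h x) := lch.symm

private lemma PL1 {t : ℝ} (ht0 : 0 < t) (ht1 : t < 1) {f g h : ℝ → ℝ}
    (hfm : Measurable f) (hgm : Measurable g) (hhm : Measurable h)
    (hf0 : ∀ x, 0 ≤ f x) (hg0 : ∀ x, 0 ≤ g x) (hh0 : ∀ x, 0 ≤ h x)
    (hfi : Integrable f) (hgi : Integrable g) (hhi : Integrable h)
    (hfb : BddAbove (Set.range f)) (hgb : BddAbove (Set.range g))
    (hyp : ∀ x y, f x ^ (1 - t) * g y ^ t ≤ h ((1-t)*x + t*y)) :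
    (∫ x, f x) ^ (1-t) * (∫ x, g x) ^ t ≤ ∫ x, h x := by
  have h1t : (0:ℝ) < 1 - t := by linarith
  have hIf : 0 ≤ ∫ x, f x := integral_nonneg hf0
  have hIg : 0 ≤ ∫ x, g x := integral_nonneg hg0
  have hIh : 0 ≤ ∫ x, h x := integral_nonneg hh0
  rcases eq_or_lt_of_le hIf with hf0' | hfpos
  · rw [← hf0', Real.zero_rpow h1t.ne', zero_mul]; exact hIh
  rcases eq_or_lt_of_le hIg with hg0' | hgpos
  · rw [← hg0', Real.zero_rpow ht0.ne', mul_zero]; exact hIh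
  set Mf := sSup (Set.range f) with hMf
  set Mg := sSup (Set.range g) with hMg
  have hfle : ∀ x, f x ≤ Mf := fun x => le_csSup hfb ⟨x, rfl⟩
  have hgle : ∀ x, g x ≤ Mg := fun x => le_csSup hgb ⟨x, rfl⟩
  have hMfpos : 0 < Mf := by
    by_contra hcon
    push_neg at hcon
    have : ∀ x, f x = 0 := fun x => le_antisymm ((hfle x).trans hcon) (hf0 x)
    rw [integral_congr_ae (ae_of_all _ this), integral_zero] at hfpos
    exact lt_irrefl _ hfpos
  have hMgpos : 0 < Mg := by
    by_contra hcon
    push_neg at hcon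
    have : ∀ x, g x = 0 := fun x => le_antisymm ((hgle x).trans hcon) (hg0 x)
    rw [integral_congr_ae (ae_of_all _ this), integral_zero] at hgpos
    exact lt_irrefl _ hgpos
  set D := Mf ^ (1-t) * Mg ^ t with hD
  have hDpos : 0 < D := mul_pos (Real.rpow_pos_of_pos hMfpos _) (Real.rpow_pos_of_pos hMgpos _)
  set f' : ℝ → ℝ := fun x => f x / Mf with hf'
  set g' : ℝ → ℝ := fun x => g x / Mg with hg'
  set h' : ℝ → ℝ := fun x => h x / D with hh'
  have core := PL1_core ht0 ht1 (hfm.div_const Mf) (hgm.div_const Mg) (hhm.div_const D)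
    (fun x => div_nonneg (hf0 x) hMfpos.le) (fun x => div_nonneg (hg0 x) hMgpos.le)
    (fun x => div_nonneg (hh0 x) hDpos.le)
    (fun x => div_le_one_of_le₀ (hfle x) hMfpos.le)
    (fun x => div_le_one_of_le₀ (hgle x) hMgpos.le)
    (fun u hu0 hu1 => by
      obtain ⟨y, ⟨x, rfl⟩, hxy⟩ := exists_lt_of_lt_csSup (Set.range_nonempty f)
        (by nlinarith : u * Mf < Mf)
      exact ⟨x, (lt_div_iff₀ hMfpos).2 hxy⟩)
    (fun u hu0 hu1 => by
      obtain ⟨y, ⟨x, rfl⟩, hxy⟩ := exists_lt_of_lt_csSup (Set.range_nonempty g)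
        (by nlinarith : u * Mg < Mg)
      exact ⟨x, (lt_div_iff₀ hMgpos).2 hxy⟩)
    (fun x y => by
      show (f x / Mf) ^ (1-t) * (g y / Mg) ^ t ≤ h ((1-t)*x + t*y) / D
      rw [Real.div_rpow (hf0 x) hMfpos.le, Real.div_rpow (hg0 y) hMgpos.le,
        div_mul_div_comm, ← hD]
      gcongr
      exact hyp x y)
  -- convert core to real-integral inequality
  have cf : ENNReal.ofReal (∫ x, f' x) = ∫⁻ x, ENNReal.ofReal (f' x) :=
    ofReal_integral_eq_lintegral_ofReal (hfi.div_const Mf)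
      (ae_of_all _ fun x => div_nonneg (hf0 x) hMfpos.le)
  have cg : ENNReal.ofReal (∫ x, g' x) = ∫⁻ x, ENNReal.ofReal (g' x) :=
    ofReal_integral_eq_lintegral_ofReal (hgi.div_const Mg)
      (ae_of_all _ fun x => div_nonneg (hg0 x) hMgpos.le)
  have ch : ENNReal.ofReal (∫ x, h' x) = ∫⁻ x, ENNReal.ofReal (h' x) :=
    ofReal_integral_eq_lintegral_ofReal (hhi.div_const D)
      (ae_of_all _ fun x => div_nonneg (hh0 x) hDpos.le)
  have hIf' : 0 ≤ ∫ x, f' x := integral_nonneg fun x => div_nonneg (hf0 x) hMfpos.le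
  have hIg' : 0 ≤ ∫ x, g' x := integral_nonneg fun x => div_nonneg (hg0 x) hMgpos.le
  have hIh' : 0 ≤ ∫ x, h' x := integral_nonneg fun x => div_nonneg (hh0 x) hDpos.le
  rw [← cf, ← cg, ← ch, ← ENNReal.ofReal_mul h1t.le, ← ENNReal.ofReal_mul ht0.le,
    ← ENNReal.ofReal_add (mul_nonneg h1t.le hIf') (mul_nonneg ht0.le hIg')] at core
  have real_ineq : ((1-t) * ∫ x, f' x) + t * ∫ x, g' x ≤ ∫ x, h' x :=
    (ENNReal.ofReal_le_ofReal_iff hIh').1 core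
  have amgm : (∫ x, f' x) ^ (1-t) * (∫ x, g' x) ^ t ≤ ((1-t) * ∫ x, f' x) + t * ∫ x, g' x :=
    Real.geom_mean_le_arith_mean2_weighted h1t.le ht0.le hIf' hIg' (by ring)
  have final : (∫ x, f' x) ^ (1-t) * (∫ x, g' x) ^ t ≤ ∫ x, h' x := amgm.trans real_ineq
  have ef : ∫ x, f' x = (∫ x, f x) / Mf := integral_div Mf f
  have eg : ∫ x, g' x = (∫ x, g x) / Mg := integral_div Mg g
  have eh : ∫ x, h' x = (∫ x, h x) / D := integral_div D h
  rw [ef, eg, eh, Real.div_rpow hIf hMfpos.le, Real.div_rpow hIg hMgpos.le,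
    div_mul_div_comm, ← hD, div_le_div_iff_of_pos_right hDpos] at final
  exact final

end PrekopaLeindler

section QuadForm
variable {a b c C : ℝ}

-- quadratic form bounds
lemma Q_lower (ha : 0 < a) (hc : 0 < c) (hdet : b ^ 2 < a * c) (x y : ℝ) :
    (a*c - b^2)/(a+c) * (x^2 + y^2) ≤ a * x ^ 2 + 2 * b * x * y + c * y ^ 2 := by
  rw [div_mul_eq_mul_div, div_le_iff₀ (by linarith)]
  nlinarith [sq_nonneg (a*x + b*y), sq_nonneg (b*x + c*y)]

lemma Q_nonneg (ha : 0 < a) (hc : 0 < c) (hdet : b ^ 2 < a * c) (x y : ℝ) :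
    0 ≤ a * x ^ 2 + 2 * b * x * y + c * y ^ 2 := by
  nlinarith [sq_nonneg (a*x + b*y), sq_nonneg y, Q_lower ha hc hdet x y]

lemma Q_convex (ha : 0 < a) (hc : 0 < c) (hdet : b ^ 2 < a * c) {t : ℝ}
    (ht0 : 0 ≤ t) (ht1 : t ≤ 1) (x₁ y₁ x₂ y₂ : ℝ) :
    a * ((1-t)*x₁ + t*x₂) ^ 2 + 2 * b * ((1-t)*x₁ + t*x₂) * ((1-t)*y₁ + t*y₂)
      + c * ((1-t)*y₁ + t*y₂) ^ 2
    ≤ (1-t) * (a * x₁ ^ 2 + 2 * b * x₁ * y₁ + c * y₁ ^ 2)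
      + t * (a * x₂ ^ 2 + 2 * b * x₂ * y₂ + c * y₂ ^ 2) := by
  nlinarith [Q_nonneg ha hc hdet (x₁ - x₂) (y₁ - y₂), mul_nonneg (mul_nonneg ht0 (by linarith : (0:ℝ) ≤ 1 - t)) (Q_nonneg ha hc hdet (x₁ - x₂) (y₁ - y₂))]


end QuadForm

private lemma indicator_rpow_hyp {t : ℝ} (ht0 : 0 < t) (ht1 : t < 1) {y₁ y₂ : ℝ}
    {φ₁ φ₂ φ₀ : ℝ → ℝ} (hφ₀ : ∀ u, 0 ≤ φ₀ u)
    (key : ∀ u v, u ≤ y₁ → v ≤ y₂ → φ₁ u ^ (1-t) * φ₂ v ^ t ≤ φ₀ ((1-t)*u + t*v))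
    (u v : ℝ) :
    (Iic y₁).indicator φ₁ u ^ (1-t) * (Iic y₂).indicator φ₂ v ^ t
      ≤ (Iic ((1-t)*y₁ + t*y₂)).indicator φ₀ ((1-t)*u + t*v) := by
  have h1t : (0:ℝ) < 1 - t := by linarith
  by_cases hu : u ≤ y₁
  · by_cases hv : v ≤ y₂
    · have hmid : (1-t)*u + t*v ≤ (1-t)*y₁ + t*y₂ := by nlinarith
      rw [indicator_of_mem (mem_Iic.2 hu), indicator_of_mem (mem_Iic.2 hv),
        indicator_of_mem (mem_Iic.2 hmid)]
      exact key u v hu hv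
    · rw [indicator_of_notMem (fun hm => hv (mem_Iic.1 hm)), Real.zero_rpow ht0.ne',
        mul_zero]
      exact indicator_nonneg (fun x _ => hφ₀ x) _
  · rw [indicator_of_notMem (fun hm => hu (mem_Iic.1 hm)), Real.zero_rpow h1t.ne',
      zero_mul]
    exact indicator_nonneg (fun x _ => hφ₀ x) _


/-- the cumulative distribution function
`F(x,y) = ∫_{-∞}^x ∫_{-∞}^y f` of (the density `f` of) a nondegenerate
centered bivariate Gaussian is log-concave on `ℝ²`. -/
theorem gaussian_cdf_log_concave (a b c C : ℝ)
    (ha : 0 < a) (hc : 0 < c) (hdet : b ^ 2 < a * c) (hC : 0 < C)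
    (f : ℝ × ℝ → ℝ)
    (hf : ∀ p : ℝ × ℝ,
      f p = C * Real.exp (-(a * p.1 ^ 2 + 2 * b * p.1 * p.2 + c * p.2 ^ 2) / 2))
    (hnorm : ∫ p, f p = 1)
    (F : ℝ → ℝ → ℝ)
    (hF : ∀ x y, F x y = ∫ p in {q : ℝ × ℝ | q.1 ≤ x ∧ q.2 ≤ y}, f p) :
    ConcaveOn ℝ Set.univ (fun p : ℝ × ℝ => Real.log (F p.1 p.2)) := by
  set ε : ℝ := (a*c - b^2)/(a+c) with hε
  have hεpos : 0 < ε := div_pos (by linarith) (by linarith)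
  have fcont : Continuous f := by
    have : f = fun p : ℝ × ℝ =>
        C * Real.exp (-(a * p.1 ^ 2 + 2 * b * p.1 * p.2 + c * p.2 ^ 2) / 2) := funext hf
    rw [this]; continuity
  have fpos : ∀ p, 0 < f p := fun p => by rw [hf p]; positivity
  have fleC : ∀ p, f p ≤ C := by
    intro p
    rw [hf p]
    nth_rewrite 2 [show C = C * Real.exp 0 by simp]
    gcongr
    have := Q_nonneg ha hc hdet p.1 p.2
    linarith
  have fbound : ∀ p : ℝ × ℝ,
      f p ≤ C * Real.exp (-(ε/2) * p.1^2) * Real.exp (-(ε/2) * p.2^2) := by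
    intro p
    have hq := Q_lower ha hc hdet p.1 p.2
    rw [← hε] at hq
    calc f p = C * Real.exp (-(a * p.1 ^ 2 + 2 * b * p.1 * p.2 + c * p.2 ^ 2) / 2) := hf p
      _ ≤ C * Real.exp (-(ε/2) * p.1^2 + -(ε/2) * p.2^2) := by gcongr; nlinarith
      _ = C * Real.exp (-(ε/2) * p.1^2) * Real.exp (-(ε/2) * p.2^2) := by
          rw [Real.exp_add]; ring
  have gauss_int : Integrable (fun x : ℝ => Real.exp (-(ε/2) * x^2)) :=
    integrable_exp_neg_mul_sq (by positivity)
  have fint : Integrable f := by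
    have hb : Integrable (fun p : ℝ × ℝ =>
        (C * Real.exp (-(ε/2) * p.1^2)) * Real.exp (-(ε/2) * p.2^2)) := by
      rw [Measure.volume_eq_prod]
      exact Integrable.mul_prod (gauss_int.const_mul C) gauss_int
    refine hb.mono' fcont.aestronglyMeasurable (ae_of_all _ fun p => ?_)
    rw [Real.norm_eq_abs, abs_of_pos (fpos p)]
    calc f p ≤ C * Real.exp (-(ε/2) * p.1^2) * Real.exp (-(ε/2) * p.2^2) := fbound p
      _ = (C * Real.exp (-(ε/2) * p.1^2)) * Real.exp (-(ε/2) * p.2^2) := by ring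
  -- log-concavity of f
  have flogc : ∀ {t : ℝ}, 0 ≤ t → t ≤ 1 → ∀ p q : ℝ × ℝ,
      f p ^ (1-t) * f q ^ t ≤ f ((1-t)*p.1 + t*q.1, (1-t)*p.2 + t*q.2) := by
    intro t ht0 ht1 p q
    have hCC : C ^ (1-t) * C ^ t = C := by
      rw [← Real.rpow_add hC]; norm_num
    rw [hf p, hf q, hf ((1-t)*p.1 + t*q.1, (1-t)*p.2 + t*q.2)]
    rw [Real.mul_rpow hC.le (Real.exp_nonneg _), Real.mul_rpow hC.le (Real.exp_nonneg _),
      ← Real.exp_mul, ← Real.exp_mul]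
    calc C ^ (1-t) * Real.exp (-(a * p.1 ^ 2 + 2 * b * p.1 * p.2 + c * p.2 ^ 2) / 2 * (1-t)) *
          (C ^ t * Real.exp (-(a * q.1 ^ 2 + 2 * b * q.1 * q.2 + c * q.2 ^ 2) / 2 * t))
        = (C ^ (1-t) * C ^ t) * Real.exp (-(a * p.1 ^ 2 + 2 * b * p.1 * p.2 + c * p.2 ^ 2) / 2 * (1-t)
            + -(a * q.1 ^ 2 + 2 * b * q.1 * q.2 + c * q.2 ^ 2) / 2 * t) := by
          rw [Real.exp_add]; ring
      _ ≤ (C ^ (1-t) * C ^ t) * Real.exp (-(a * ((1-t)*p.1 + t*q.1) ^ 2 + 2 * b * ((1-t)*p.1 + t*q.1) *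
            ((1-t)*p.2 + t*q.2) + c * ((1-t)*p.2 + t*q.2) ^ 2) / 2) := by
          gcongr
          have := Q_convex ha hc hdet ht0 ht1 p.1 p.2 q.1 q.2
          linarith
      _ = C * Real.exp (-(a * ((1-t)*p.1 + t*q.1) ^ 2 + 2 * b * ((1-t)*p.1 + t*q.1) *
            ((1-t)*p.2 + t*q.2) + c * ((1-t)*p.2 + t*q.2) ^ 2) / 2) := by rw [hCC]
  -- slice integrability and the inner marginal G
  set K : ℝ := C * ∫ u : ℝ, Real.exp (-(ε/2) * u^2) with hK
  have hKnonneg : 0 ≤ K := mul_nonneg hC.le (integral_nonneg fun u => Real.exp_nonneg _)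
  have slice_cont : ∀ s : ℝ, Continuous fun u => f (s, u) :=
    fun s => fcont.comp (Continuous.prodMk_right s)
  have slice_int : ∀ s : ℝ, Integrable fun u => f (s, u) := by
    intro s
    refine (gauss_int.const_mul (C * Real.exp (-(ε/2) * s^2))).mono'
      (slice_cont s).aestronglyMeasurable (ae_of_all _ fun u => ?_)
    rw [Real.norm_eq_abs, abs_of_pos (fpos _)]
    calc f (s,u) ≤ C * Real.exp (-(ε/2) * s^2) * Real.exp (-(ε/2) * u^2) := fbound (s,u)
      _ = (C * Real.exp (-(ε/2) * s^2)) * Real.exp (-(ε/2) * u^2) := by ring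
  set G : ℝ → ℝ → ℝ := fun y s => ∫ u, (Iic y).indicator (fun u => f (s, u)) u with hG
  have ind_int : ∀ y s : ℝ, Integrable ((Iic y).indicator (fun u => f (s, u))) :=
    fun y s => (slice_int s).indicator measurableSet_Iic
  have hGnonneg : ∀ y s, 0 ≤ G y s := fun y s =>
    integral_nonneg (indicator_nonneg fun u _ => (fpos _).le)
  have hGbound : ∀ y s, G y s ≤ K * Real.exp (-(ε/2) * s^2) := by
    intro y s
    have step : G y s ≤ ∫ u, (C * Real.exp (-(ε/2) * s^2)) * Real.exp (-(ε/2) * u^2) := by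
      refine integral_mono (ind_int y s) (gauss_int.const_mul _) fun u => ?_
      by_cases hu : u ∈ Iic y
      · rw [indicator_of_mem hu]
        calc f (s,u) ≤ C * Real.exp (-(ε/2)*s^2) * Real.exp (-(ε/2)*u^2) := fbound (s,u)
          _ = _ := by ring
      · rw [indicator_of_notMem hu]; positivity
    calc G y s ≤ _ := step
      _ = K * Real.exp (-(ε/2) * s^2) := by rw [integral_const_mul, hK]; ring
  have hGleK : ∀ y s, G y s ≤ K := by
    intro y s
    calc G y s ≤ K * Real.exp (-(ε/2)*s^2) := hGbound y s
      _ ≤ K * 1 := by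
          gcongr
          rw [← Real.exp_zero]
          exact Real.exp_le_exp.2 (by nlinarith [sq_nonneg s])
      _ = K := mul_one K
  have hGmeas : ∀ y, Measurable (G y) := by
    intro y
    have h1 : StronglyMeasurable (fun p : ℝ × ℝ => ({p : ℝ × ℝ | p.2 ≤ y}).indicator f p) :=
      fcont.stronglyMeasurable.indicator (measurableSet_le measurable_snd measurable_const)
    have h2 := StronglyMeasurable.integral_prod_right' (ν := volume) h1
    have he : G y = fun s => ∫ u, ({p : ℝ × ℝ | p.2 ≤ y}).indicator f (s, u) := by
      funext s
      show (∫ u, (Iic y).indicator (fun u => f (s, u)) u) = _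
      refine integral_congr_ae (ae_of_all _ fun u => ?_)
      by_cases hu : u ≤ y <;> simp [Set.indicator_apply, hu, mem_Iic]
    rw [he]
    exact h2.measurable
  have hGind_int : ∀ x y : ℝ, Integrable ((Iic x).indicator (G y)) := by
    intro x y
    refine (gauss_int.const_mul K).mono'
      ((hGmeas y).indicator measurableSet_Iic).aestronglyMeasurable (ae_of_all _ fun s => ?_)
    rw [Real.norm_eq_abs, abs_of_nonneg (indicator_nonneg (fun s _ => hGnonneg y s) s)]
    by_cases hs : s ∈ Iic x
    · rw [indicator_of_mem hs]; exact hGbound y s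
    · rw [indicator_of_notMem hs]; positivity
  have hsetprod : ∀ x y : ℝ, {q : ℝ × ℝ | q.1 ≤ x ∧ q.2 ≤ y} = Iic x ×ˢ Iic y := by
    intro x y; ext q; simp [Set.mem_prod, mem_Iic, Prod.le_def]
  have hFeq : ∀ x y, F x y = ∫ s, (Iic x).indicator (G y) s := by
    intro x y
    rw [hF x y, hsetprod x y, integral_indicator measurableSet_Iic]
    calc ∫ p in Iic x ×ˢ Iic y, f p = ∫ s in Iic x, ∫ u in Iic y, f (s, u) := by
          rw [Measure.volume_eq_prod]
          exact setIntegral_prod f (by rw [← Measure.volume_eq_prod]; exact fint.integrableOn)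
      _ = ∫ s in Iic x, G y s := by
          refine setIntegral_congr_fun measurableSet_Iic fun s _ => ?_
          exact (integral_indicator measurableSet_Iic).symm
  have hFpos : ∀ x y, 0 < F x y := by
    intro x y
    rw [hF x y, hsetprod x y]
    rw [setIntegral_pos_iff_support_of_nonneg_ae (ae_of_all _ fun p => (fpos p).le)
      fint.integrableOn]
    have hsupp : Function.support f = Set.univ := eq_univ_of_forall fun p => (fpos p).ne'
    rw [hsupp, univ_inter, Measure.volume_eq_prod, Measure.prod_prod, Real.volume_Iic]
    simp
  -- key Prekopa-Leindler style inequality for F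
  have keyineq : ∀ t : ℝ, 0 < t → t < 1 → ∀ x₁ y₁ x₂ y₂ : ℝ,
      F x₁ y₁ ^ (1-t) * F x₂ y₂ ^ t ≤ F ((1-t)*x₁ + t*x₂) ((1-t)*y₁ + t*y₂) := by
    intro t ht0 ht1 x₁ y₁ x₂ y₂
    have bddind : ∀ y : ℝ, ∀ s : ℝ, BddAbove (Set.range ((Iic y).indicator (fun u => f (s, u)))) := by
      intro y s
      refine ⟨C, ?_⟩
      rintro w ⟨u, rfl⟩
      by_cases hu : u ∈ Iic y
      · rw [indicator_of_mem hu]; exact fleC _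
      · rw [indicator_of_notMem hu]; exact hC.le
    have stepA : ∀ s₁ s₂ : ℝ,
        G y₁ s₁ ^ (1-t) * G y₂ s₂ ^ t ≤ G ((1-t)*y₁ + t*y₂) ((1-t)*s₁ + t*s₂) := by
      intro s₁ s₂
      simp only [hG]
      refine PL1 ht0 ht1
        ((slice_cont s₁).measurable.indicator measurableSet_Iic)
        ((slice_cont s₂).measurable.indicator measurableSet_Iic)
        ((slice_cont _).measurable.indicator measurableSet_Iic)
        (indicator_nonneg fun u _ => (fpos _).le)
        (indicator_nonneg fun u _ => (fpos _).le)
        (indicator_nonneg fun u _ => (fpos _).le)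
        (ind_int _ _) (ind_int _ _) (ind_int _ _)
        (bddind _ _) (bddind _ _) ?_
      exact indicator_rpow_hyp ht0 ht1 (fun u => (fpos _).le)
        (fun u v _ _ => flogc ht0.le ht1.le (s₁, u) (s₂, v))
    rw [hFeq x₁ y₁, hFeq x₂ y₂, hFeq ((1-t)*x₁ + t*x₂) ((1-t)*y₁ + t*y₂)]
    refine PL1 ht0 ht1
      ((hGmeas y₁).indicator measurableSet_Iic)
      ((hGmeas y₂).indicator measurableSet_Iic)
      ((hGmeas _).indicator measurableSet_Iic)
      (indicator_nonneg fun s _ => hGnonneg _ _)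
      (indicator_nonneg fun s _ => hGnonneg _ _)
      (indicator_nonneg fun s _ => hGnonneg _ _)
      (hGind_int _ _) (hGind_int _ _) (hGind_int _ _)
      ⟨K, by rintro w ⟨s, rfl⟩
             by_cases hs : s ∈ Iic x₁
             · rw [indicator_of_mem hs]; exact hGleK _ _
             · rw [indicator_of_notMem hs]; exact hKnonneg⟩
      ⟨K, by rintro w ⟨s, rfl⟩
             by_cases hs : s ∈ Iic x₂
             · rw [indicator_of_mem hs]; exact hGleK _ _
             · rw [indicator_of_notMem hs]; exact hKnonneg⟩
      (indicator_rpow_hyp ht0 ht1 (hGnonneg _) (fun s₁ s₂ _ _ => stepA s₁ s₂))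
  -- conclude concavity of log ∘ F
  refine ⟨convex_univ, ?_⟩
  intro p _ q _ α β hα hβ hαβ
  simp only [smul_eq_mul, Prod.fst_add, Prod.snd_add, Prod.smul_fst, Prod.smul_snd,
    smul_eq_mul]
  rcases eq_or_lt_of_le hα with hα0 | hαpos
  · have hβ1 : β = 1 := by linarith
    rw [← hα0, hβ1]
    simp
  rcases eq_or_lt_of_le hβ with hβ0 | hβpos
  · have hα1 : α = 1 := by linarith
    rw [← hβ0, hα1]
    simp
  have hβ1 : β < 1 := by linarith
  have hαc : 1 - β = α := by linarith
  have key := keyineq β hβpos hβ1 p.1 p.2 q.1 q.2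
  rw [hαc] at key
  have hlhs : 0 < F p.1 p.2 ^ α * F q.1 q.2 ^ β := by
    have := hFpos p.1 p.2
    have := hFpos q.1 q.2
    positivity
  calc α * Real.log (F p.1 p.2) + β * Real.log (F q.1 q.2)
      = Real.log (F p.1 p.2 ^ α * F q.1 q.2 ^ β) := by
        rw [Real.log_mul (Real.rpow_pos_of_pos (hFpos p.1 p.2) α).ne'
            (Real.rpow_pos_of_pos (hFpos q.1 q.2) β).ne',
          Real.log_rpow (hFpos p.1 p.2), Real.log_rpow (hFpos q.1 q.2)]
      _ ≤ Real.log (F (α*p.1 + β*q.1) (α*p.2 + β*q.2)) := Real.log_le_log hlhs key
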